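/- Let Z = X_α × ℝ^{n+1} with its block decomposition as above, and let c : [0,1] → ∂Z be a path such that c(0) has infinite itinerary. Then either c(t) has the same itinerary as c(0) for all t ∈ [0,1], or there is some t ∈ [0,1] such that c(t) has finite itinerary. -/

import Mathlib

open Set Metric Filter Topology

noncomputable section

universe u v

/-- A geodesic segment from `x` to `y`, parametrized by arc length on `[0, dist x y]`
and extended constantly afterwards (so that `γ t` makes sense for all `t ≥ 0`). -/
def IsGeodesicSegment {X : Type*} [MetricSpace X] (γ : ℝ → X) (x y : X) : Prop :=
  γ 0 = x ∧
    (∀ s ∈ Set.Icc (0 : ℝ) (dist x y), ∀ t ∈ Set.Icc (0 : ℝ) (dist x y),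
      dist (γ s) (γ t) = |s - t|) ∧
    ∀ t : ℝ, dist x y ≤ t → γ t = y

/-- A geodesic ray based at `x0`, parametrized by arc length on `[0, ∞)`. -/
def IsGeodesicRay {X : Type*} [MetricSpace X] (x0 : X) (γ : ℝ → X) : Prop :=
  γ 0 = x0 ∧ ∀ s ∈ Set.Ici (0 : ℝ), ∀ t ∈ Set.Ici (0 : ℝ), dist (γ s) (γ t) = |s - t|

/-- A metric space is CAT(0) if it is geodesic and satisfies the CN-inequality of
Bruhat–Tits (for complete geodesic spaces this is equivalent to the comparison-triangle
definition of CAT(0)). -/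
def IsCAT0 (X : Type*) [MetricSpace X] : Prop :=
  (∀ x y : X, ∃ γ : ℝ → X, IsGeodesicSegment γ x y) ∧
    ∀ p q r m : X, dist q m = dist q r / 2 → dist r m = dist q r / 2 →
      dist p m ^ 2 + dist q r ^ 2 / 4 ≤ (dist p q ^ 2 + dist p r ^ 2) / 2

/-- The visual boundary of `X` based at `x0`: the set of geodesic rays from `x0`. -/
def VisualBoundary (X : Type*) [MetricSpace X] (x0 : X) : Type _ :=
  {γ : ℝ → X // IsGeodesicRay x0 γ}

/-- The cone topology on the visual boundary, generated by the basic sets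
`U(c, r, D) = {c' | dist (c r) (c' r) < D}`. -/
instance VisualBoundary.instTopologicalSpace (X : Type*) [MetricSpace X] (x0 : X) :
    TopologicalSpace (VisualBoundary X x0) :=
  TopologicalSpace.generateFrom
    {U | ∃ (c : VisualBoundary X x0) (r D : ℝ), 0 < r ∧ 0 < D ∧
      U = {c' : VisualBoundary X x0 | dist (c.1 r) (c'.1 r) < D}}

/-- The limit set of a subset `A ⊆ X` in the visual boundary: boundary points that are
limits (in the cone topology of `X ∪ ∂X`) of sequences of points of `A`. -/
def limitSet {X : Type*} [MetricSpace X] (x0 : X) (A : Set X) :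
    Set (VisualBoundary X x0) :=
  {ξ | ∃ a : ℕ → X, (∀ n, a n ∈ A) ∧
    Tendsto (fun n => dist x0 (a n)) atTop atTop ∧
    ∃ σ : ℕ → ℝ → X, (∀ n, IsGeodesicSegment (σ n) x0 (a n)) ∧
      ∀ r : ℝ, 0 ≤ r → Tendsto (fun n => dist (σ n r) (ξ.1 r)) atTop (nhds 0)}

/-- The subset of the visual boundary consisting of rays staying in `A`; for a closed
convex subset `A` containing the basepoint this realizes the visual boundary of `A`
inside `∂X`. -/
def subBoundary {X : Type*} [MetricSpace X] (x0 : X) (A : Set X) :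
    Set (VisualBoundary X x0) :=
  {ξ | ∀ t : ℝ, 0 ≤ t → ξ.1 t ∈ A}

/-- An action of `G` on `X` by isometries (given by a homomorphism to the isometry
group) is geometric if it is properly discontinuous and cocompact. -/
def IsGeometricAction {G : Type*} {X : Type*} [Group G] [MetricSpace X]
    (ρ : G →* (X ≃ᵢ X)) : Prop :=
  (∀ K L : Set X, IsCompact K → IsCompact L →
    {g : G | ((ρ g) '' K ∩ L).Nonempty}.Finite) ∧
  ∃ K : Set X, IsCompact K ∧ ⋃ g : G, (ρ g) '' K = Set.univ

/-- A geometric action on an invariant subspace `S ⊆ X`. -/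
def IsGeometricActionOn {G X : Type*} [Group G] [MetricSpace X]
    (ρ : G →* (X ≃ᵢ X)) (S : Set X) : Prop :=
  (∀ g : G, (ρ g) '' S = S) ∧
  (∀ K L : Set X, K ⊆ S → L ⊆ S → IsCompact K → IsCompact L →
    {g : G | ((ρ g) '' K ∩ L).Nonempty}.Finite) ∧
  ∃ K : Set X, K ⊆ S ∧ IsCompact K ∧ ⋃ g : G, (ρ g) '' K = S

/-- A subset `B` of a metric space is geodesically convex if every geodesic segment
between points of `B` stays in `B`. -/
def IsGeodesicallyConvex {X : Type*} [MetricSpace X] (B : Set X) : Prop :=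
  ∀ x ∈ B, ∀ y ∈ B, ∀ γ : ℝ → X, IsGeodesicSegment γ x y →
    ∀ t ∈ Set.Icc (0 : ℝ) (dist x y), γ t ∈ B

/-- A block decomposition of the subspace `S` of a CAT(0) space `X` (take `S = univ`
for a decomposition of the whole space): a family of closed convex blocks covering `S`,
each meeting at least two others, with a parity assignment so that intersecting blocks
have opposite parity, and an `ε > 0` such that two blocks intersect iff their
`ε`-neighborhoods intersect. -/
structure BlockDecomposition (X : Type*) [MetricSpace X] (S : Set X) where
  blocks : Set (Set X)
  nonempty_blocks : ∀ B ∈ blocks, B.Nonempty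
  closed : ∀ B ∈ blocks, IsClosed B
  convex : ∀ B ∈ blocks, IsGeodesicallyConvex B
  covers : ⋃₀ blocks = S
  meets_two : ∀ B ∈ blocks, ∃ B₁ ∈ blocks, ∃ B₂ ∈ blocks,
    B₁ ≠ B₂ ∧ B₁ ≠ B ∧ B₂ ≠ B ∧ (B ∩ B₁).Nonempty ∧ (B ∩ B₂).Nonempty
  parity : Set X → Bool
  parity_cond : ∀ B ∈ blocks, ∀ B' ∈ blocks, B ≠ B' → (B ∩ B').Nonempty →
    parity B ≠ parity B'
  eps : ℝ
  eps_pos : 0 < eps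
  eps_cond : ∀ B ∈ blocks, ∀ B' ∈ blocks, B ≠ B' →
    ((B ∩ B').Nonempty ↔ (Metric.thickening eps B ∩ Metric.thickening eps B').Nonempty)

/-- A wall: a nontrivial intersection of two distinct blocks. -/
def IsWall {X : Type*} [MetricSpace X] {S : Set X} (𝓑 : BlockDecomposition X S)
    (W : Set X) : Prop :=
  ∃ B ∈ 𝓑.blocks, ∃ B' ∈ 𝓑.blocks, B ≠ B' ∧ W = B ∩ B' ∧ W.Nonempty

/-- The nerve of a block decomposition: a vertex for each block, an edge whenever two
blocks intersect nontrivially. -/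
def nerve {X : Type*} [MetricSpace X] {S : Set X} (𝓑 : BlockDecomposition X S) :
    SimpleGraph 𝓑.blocks where
  Adj B B' := B ≠ B' ∧ ((B : Set X) ∩ (B' : Set X)).Nonempty
  symm := by
    constructor
    intro B B' h
    exact ⟨fun e => h.1 e.symm, by rw [Set.inter_comm]; exact h.2⟩
  loopless := by constructor; intro B h; exact h.1 rfl

/-- The union of the block boundaries in `∂X`. -/
def blockBoundaries {X : Type*} [MetricSpace X] {S : Set X} (x0 : X)
    (𝓑 : BlockDecomposition X S) : Set (VisualBoundary X x0) :=
  ⋃ B ∈ 𝓑.blocks, limitSet x0 B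

/-- A ray `γ` enters the block `B` at time `t` if at time `t` it lies in `B` and in no
other block. -/
def entersAt {X : Type*} [MetricSpace X] {S : Set X} (𝓑 : BlockDecomposition X S)
    (γ : ℝ → X) (B : Set X) (t : ℝ) : Prop :=
  0 ≤ t ∧ B ∈ 𝓑.blocks ∧ γ t ∈ B ∧ ∀ B' ∈ 𝓑.blocks, B' ≠ B → γ t ∉ B'

/-- The set of blocks entered by a ray: the underlying set of its itinerary. -/
def enteredBlocks {X : Type*} [MetricSpace X] {S : Set X} (𝓑 : BlockDecomposition X S)
    (γ : ℝ → X) : Set (Set X) :=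
  {B | ∃ t : ℝ, entersAt 𝓑 γ B t}

/-- A ray has infinite itinerary if it enters infinitely many blocks. -/
def HasInfiniteItinerary {X : Type*} [MetricSpace X] {S : Set X}
    (𝓑 : BlockDecomposition X S) (γ : ℝ → X) : Prop :=
  (enteredBlocks 𝓑 γ).Infinite

/-- Two rays have the same itinerary: they enter the same blocks, in the same order. -/
def SameItinerary {X : Type*} [MetricSpace X] {S : Set X} (𝓑 : BlockDecomposition X S)
    (γ γ' : ℝ → X) : Prop :=
  enteredBlocks 𝓑 γ = enteredBlocks 𝓑 γ' ∧
  ∀ B B' : Set X, ∀ t s : ℝ, entersAt 𝓑 γ B t → entersAt 𝓑 γ B' s → t ≤ s →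
    ∃ t' s' : ℝ, entersAt 𝓑 γ' B t' ∧ entersAt 𝓑 γ' B' s' ∧ t' ≤ s'

/-- `G` is the amalgamated free product `A ∗_C B` along the injections `ιA, ιB`,
witnessed by `jA : A →* G`, `jB : B →* G`, via the universal property of the pushout. -/
def IsAmalgamatedProduct {A B C G : Type u} [Group A] [Group B] [Group C] [Group G]
    (ιA : C →* A) (ιB : C →* B) (jA : A →* G) (jB : B →* G) : Prop :=
  Function.Injective ιA ∧ Function.Injective ιB ∧
  jA.comp ιA = jB.comp ιB ∧
  ∀ (H : Type u) [Group H], ∀ (fA : A →* H) (fB : B →* H),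
    fA.comp ιA = fB.comp ιB → ∃! f : G →* H, f.comp jA = fA ∧ f.comp jB = fB
/-- The defining relators of a right-angled Artin group: commutators of adjacent
generators. -/
def raagRels {V : Type} (Γ : SimpleGraph V) : Set (FreeGroup V) :=
  {r | ∃ u v : V, Γ.Adj u v ∧
    r = FreeGroup.of u * FreeGroup.of v * (FreeGroup.of u)⁻¹ * (FreeGroup.of v)⁻¹}

/-- The right-angled Artin group with defining graph `Γ`. -/
abbrev RAAG {V : Type} (Γ : SimpleGraph V) : Type := PresentedGroup (raagRels Γ)

/-- The standard generator of `RAAG Γ` corresponding to the vertex `v`. -/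
def raagGen {V : Type} (Γ : SimpleGraph V) (v : V) : RAAG Γ :=
  PresentedGroup.of v

/-- The parabolic subgroup of `RAAG Γ` generated by the vertices in `S`. -/
def raagParabolic {V : Type} (Γ : SimpleGraph V) (S : Set V) : Subgroup (RAAG Γ) :=
  Subgroup.closure (raagGen Γ '' S)

/-- The defining graph of the Croke–Kleiner group: the path `a - b - c - d`. -/
abbrev CKGraph : SimpleGraph (Fin 4) := SimpleGraph.pathGraph 4

/-- The Croke–Kleiner right-angled Artin group
`CK = ⟨a,b,c,d | [a,b],[b,c],[c,d]⟩` (generators `a,b,c,d` are `0,1,2,3`). -/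
abbrev CK : Type := RAAG CKGraph

lemma raagParabolic_mono {V : Type} (Γ : SimpleGraph V) {S T : Set V} (h : S ⊆ T) :
    raagParabolic Γ S ≤ raagParabolic Γ T :=
  Subgroup.closure_mono (Set.image_mono h)

/-- A model of the universal cover of the Salvetti complex of `A_Γ`: a proper complete
CAT(0) space with a free geometric action of `A_Γ`, together with, for each parabolic
subgroup, the closed convex subcomplex it stabilizes cocompactly. -/
structure SalvettiModel {V : Type} (Γ : SimpleGraph V) where
  X : Type
  [ms : MetricSpace X]
  [proper : ProperSpace X]
  [complete : CompleteSpace X]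
  nonempty : Nonempty X
  cat0 : IsCAT0 X
  ρ : RAAG Γ →* (X ≃ᵢ X)
  geometric : IsGeometricAction ρ
  free : ∀ g : RAAG Γ, g ≠ 1 → ∀ x : X, (ρ g) x ≠ x
  parabSub : Set V → Set X
  parabSub_closed : ∀ S : Set V, IsClosed (parabSub S)
  parabSub_convex : ∀ S : Set V, IsGeodesicallyConvex (parabSub S)
  parabSub_geometric : ∀ S : Set V,
    IsGeometricActionOn (ρ.comp (raagParabolic Γ S).subtype) (parabSub S)

attribute [instance] SalvettiModel.ms SalvettiModel.proper SalvettiModel.complete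

/-- A bundled nonempty proper complete CAT(0) space. -/
structure CAT0Bundle : Type 1 where
  X : Type
  [ms : MetricSpace X]
  [proper : ProperSpace X]
  [complete : CompleteSpace X]
  nonempty : Nonempty X
  cat0 : IsCAT0 X

attribute [instance] CAT0Bundle.ms CAT0Bundle.proper CAT0Bundle.complete

/-- A CAT(0) group: a group admitting a geometric action on a proper complete CAT(0)
space. -/
def IsCAT0Group (G : Type) [Group G] : Prop :=
  ∃ (𝒳 : CAT0Bundle) (ρ : G →* (𝒳.X ≃ᵢ 𝒳.X)), IsGeometricAction ρ

/-- A space is `n`-connected if it is nonempty, path connected, and its homotopy groups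
`π_i` vanish for `1 ≤ i ≤ n`. -/
def NConnected (n : ℕ) (Z : Type*) [TopologicalSpace Z] : Prop :=
  Nonempty Z ∧ PathConnectedSpace Z ∧
    ∀ i : ℕ, 1 ≤ i → i ≤ n → ∀ z : Z, Subsingleton (HomotopyGroup (Fin i) Z z)

/-- The (unreduced) suspension of a topological space. -/
def Suspension (W : Type*) [TopologicalSpace W] : Type _ :=
  Quot (fun p q : W × unitInterval =>
    p = q ∨ (p.2 = 0 ∧ q.2 = 0) ∨ (p.2 = 1 ∧ q.2 = 1))

instance (W : Type*) [TopologicalSpace W] : TopologicalSpace (Suspension W) := by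
  unfold Suspension; infer_instance

/-- The open cone on a topological space: `W × [0,1)` with `W × {0}` collapsed. -/
def OpenCone (W : Type*) [TopologicalSpace W] : Type _ :=
  Quot (fun p q : W × Set.Ico (0 : ℝ) 1 => p = q ∨ ((p.2 : ℝ) = 0 ∧ (q.2 : ℝ) = 0))

instance (W : Type*) [TopologicalSpace W] : TopologicalSpace (OpenCone W) := by
  unfold OpenCone; infer_instance

/-- The defining relation of the topological join `X ∗ Y` on `X × Y × [0,1]`:
`(x,y,0) ∼ (x,y',0)` and `(x,y,1) ∼ (x',y,1)`. -/
def joinRel (X Y : Type*) (p q : X × Y × unitInterval) : Prop :=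
  (p.2.2 = 0 ∧ q.2.2 = 0 ∧ p.1 = q.1) ∨ (p.2.2 = 1 ∧ q.2.2 = 1 ∧ p.2.1 = q.2.1) ∨ p = q

/-- The topological join `X ∗ Y`: the quotient of `X × Y × [0,1]` identifying
`(x,y,0) ∼ (x,y',0)` and `(x,y,1) ∼ (x',y,1)`. -/
def TopJoin (X Y : Type*) [TopologicalSpace X] [TopologicalSpace Y] : Type _ :=
  Quot (joinRel X Y)

/-- The quotient map onto the topological join. -/
def TopJoin.mk {X Y : Type*} [TopologicalSpace X] [TopologicalSpace Y]
    (p : X × Y × unitInterval) : TopJoin X Y :=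
  Quot.mk (joinRel X Y) p

instance (X Y : Type*) [TopologicalSpace X] [TopologicalSpace Y] :
    TopologicalSpace (TopJoin X Y) := by
  unfold TopJoin; infer_instance

/-- The Croke–Kleiner block decomposition of (a model of) the universal cover of the
Salvetti complex of `CK`: the blocks are the `CK`-translates of the convex subcomplexes
stabilized by the parabolic subgroups `⟨a,b,c⟩` and `⟨b,c,d⟩`, i.e. the blocks coming
from the splitting `CK = ⟨a,b,c⟩ ∗_{⟨b,c⟩} ⟨b,c,d⟩ ≅ (F₂ × ℤ) ∗_{ℤ²} (F₂ × ℤ)`. -/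
def IsCKBlockDecomposition (M : SalvettiModel CKGraph)
    (𝓑 : BlockDecomposition M.X Set.univ) : Prop :=
  𝓑.blocks = {S : Set M.X | ∃ g : CK,
    S = (M.ρ g) '' M.parabSub ({0, 1, 2} : Set (Fin 4)) ∨
    S = (M.ρ g) '' M.parabSub ({1, 2, 3} : Set (Fin 4))}

/-- The `ℓ²`-product `Z = X × ℝ^{n+1}` (so that `Z` is again CAT(0) when `X` is). -/
abbrev ZProd (X : Type) [MetricSpace X] (n : ℕ) : Type :=
  WithLp 2 (X × EuclideanSpace ℝ (Fin (n + 1)))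

/-- The `X`-coordinate of a point of `Z = X × ℝ^{n+1}`. -/
def ZProd.fst {X : Type} [MetricSpace X] {n : ℕ} (z : ZProd X n) : X :=
  (WithLp.equiv 2 (X × EuclideanSpace ℝ (Fin (n + 1))) z).1

/-- The block decomposition of `Z = X × ℝ^{n+1}` whose blocks are the products of the
blocks of a block decomposition of `X` with the `ℝ^{n+1}` factor. -/
def IsCylinderDecomposition {X : Type} [MetricSpace X] {n : ℕ}
    (𝓑X : BlockDecomposition X Set.univ)
    (𝓑Z : BlockDecomposition (ZProd X n) Set.univ) : Prop :=
  𝓑Z.blocks = {S : Set (ZProd X n) | ∃ B ∈ 𝓑X.blocks,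
    S = {z : ZProd X n | ZProd.fst z ∈ B}}

/-- The set of poles of a block `B`: the intersection of the boundaries of the walls
of `B`.  (For a block `T₄ × ℝ^{n+2}`, with boundary the join `𝒞 ∗ S^{n+1}` of a Cantor
set and a sphere, this is exactly the sphere `S^{n+1} = ∂(ℝ^{n+2})` of poles.) -/
def poles {X : Type*} [MetricSpace X] {S : Set X} (x0 : X)
    (𝓑 : BlockDecomposition X S) (B : Set X) : Set (VisualBoundary X x0) :=
  ⋂ B' ∈ {B' | B' ∈ 𝓑.blocks ∧ B' ≠ B ∧ (B ∩ B').Nonempty}, limitSet x0 (B ∩ B')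

/-- The `Sⁿ` join factor of `∂Z = ∂X ∗ Sⁿ` for `Z = X × ℝ^{n+1}`: the boundary points
of rays with constant `X`-coordinate. -/
def sphereFactor {X : Type} [MetricSpace X] {n : ℕ} (z0 : ZProd X n) :
    Set (VisualBoundary (ZProd X n) z0) :=
  {ξ | ∀ t : ℝ, 0 ≤ t → ZProd.fst (ξ.1 t) = ZProd.fst z0}

/-! ### Auxiliary development for Statement 18 -/

namespace CKItinerary

variable {X : Type*} [MetricSpace X]

/-- Every point lies in some block. -/
lemma exists_block (𝓑 : BlockDecomposition X Set.univ) (x : X) :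
    ∃ B ∈ 𝓑.blocks, x ∈ B := by
  have hx : x ∈ ⋃₀ 𝓑.blocks := by rw [𝓑.covers]; exact Set.mem_univ x
  rcases hx with ⟨B, hB, hxB⟩
  exact ⟨B, hB, hxB⟩

/-- No three distinct blocks pairwise intersect (parity is 2-valued). -/
lemma no_three (𝓑 : BlockDecomposition X Set.univ) {B₁ B₂ B₃ : Set X}
    (h₁ : B₁ ∈ 𝓑.blocks) (h₂ : B₂ ∈ 𝓑.blocks) (h₃ : B₃ ∈ 𝓑.blocks)
    (h₁₂ : B₁ ≠ B₂) (h₁₃ : B₁ ≠ B₃) (h₂₃ : B₂ ≠ B₃)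
    (n₁₂ : (B₁ ∩ B₂).Nonempty) (n₁₃ : (B₁ ∩ B₃).Nonempty)
    (n₂₃ : (B₂ ∩ B₃).Nonempty) : False := by
  have p₁₂ := 𝓑.parity_cond B₁ h₁ B₂ h₂ h₁₂ n₁₂
  have p₁₃ := 𝓑.parity_cond B₁ h₁ B₃ h₃ h₁₃ n₁₃
  have p₂₃ := 𝓑.parity_cond B₂ h₂ B₃ h₃ h₂₃ n₂₃
  cases hb₁ : 𝓑.parity B₁ <;> cases hb₂ : 𝓑.parity B₂ <;> cases hb₃ : 𝓑.parity B₃ <;>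
    simp_all

/-- No three distinct blocks all come within `eps` of a common point. -/
lemma near_two (𝓑 : BlockDecomposition X Set.univ) (x : X) {B₁ B₂ B₃ : Set X}
    (h₁ : B₁ ∈ 𝓑.blocks) (h₂ : B₂ ∈ 𝓑.blocks) (h₃ : B₃ ∈ 𝓑.blocks)
    (h₁₂ : B₁ ≠ B₂) (h₁₃ : B₁ ≠ B₃) (h₂₃ : B₂ ≠ B₃)
    (m₁ : ∃ y ∈ B₁, dist y x < 𝓑.eps) (m₂ : ∃ y ∈ B₂, dist y x < 𝓑.eps)
    (m₃ : ∃ y ∈ B₃, dist y x < 𝓑.eps) : False := by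
  have t : ∀ {B : Set X}, (∃ y ∈ B, dist y x < 𝓑.eps) → x ∈ Metric.thickening 𝓑.eps B := by
    rintro B ⟨y, hy, hd⟩
    exact Metric.mem_thickening_iff.mpr ⟨y, hy, by rwa [dist_comm]⟩
  have n₁₂ : (B₁ ∩ B₂).Nonempty :=
    (𝓑.eps_cond B₁ h₁ B₂ h₂ h₁₂).mpr ⟨x, t m₁, t m₂⟩
  have n₁₃ : (B₁ ∩ B₃).Nonempty :=
    (𝓑.eps_cond B₁ h₁ B₃ h₃ h₁₃).mpr ⟨x, t m₁, t m₃⟩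
  have n₂₃ : (B₂ ∩ B₃).Nonempty :=
    (𝓑.eps_cond B₂ h₂ B₃ h₃ h₂₃).mpr ⟨x, t m₂, t m₃⟩
  exact no_three 𝓑 h₁ h₂ h₃ h₁₂ h₁₃ h₂₃ n₁₂ n₁₃ n₂₃

lemma finite_of_no_three {α : Type*} {S : Set α}
    (h : ∀ a ∈ S, ∀ b ∈ S, ∀ c ∈ S, a = b ∨ a = c ∨ b = c) : S.Finite := by
  by_cases hS : ∃ a ∈ S, ∃ b ∈ S, a ≠ b
  · obtain ⟨a, ha, b, hb, hab⟩ := hS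
    apply Set.Finite.subset ((Set.finite_singleton b).insert a)
    intro c hc
    rcases h c hc a ha b hb with h1 | h1 | h1
    · exact Set.mem_insert_iff.mpr (Or.inl h1)
    · exact Set.mem_insert_iff.mpr (Or.inr h1)
    · exact absurd h1 hab
  · push_neg at hS
    exact Set.Subsingleton.finite (fun a ha b hb => hS a ha b hb)

/-- At most two blocks come within `eps` of a given point; in particular this set
is finite. -/
lemma blocks_near_ball_finite (𝓑 : BlockDecomposition X Set.univ) (x : X) :
    {B | B ∈ 𝓑.blocks ∧ ∃ y ∈ B, dist y x < 𝓑.eps}.Finite := by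
  apply finite_of_no_three
  intro B₁ h₁ B₂ h₂ B₃ h₃
  by_contra hcon
  push_neg at hcon
  exact near_two 𝓑 x h₁.1 h₂.1 h₃.1 hcon.1 hcon.2.1 hcon.2.2 h₁.2 h₂.2 h₃.2

/-- Only finitely many blocks come within `eps/2` of a nonempty compact set. -/
lemma finite_near (𝓑 : BlockDecomposition X Set.univ) {K : Set X} (hK : IsCompact K)
    (hKne : K.Nonempty) :
    {B | B ∈ 𝓑.blocks ∧ ∃ y ∈ B, Metric.infDist y K < 𝓑.eps / 2}.Finite := by
  have heps := 𝓑.eps_pos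
  obtain ⟨T, hTK, hTcover⟩ := hK.elim_nhds_subcover (fun x => Metric.ball x (𝓑.eps / 4))
      (fun x _ => Metric.ball_mem_nhds x (by linarith))
  apply Set.Finite.subset (T.finite_toSet.biUnion (fun x _ => blocks_near_ball_finite 𝓑 x))
  rintro B ⟨hB, y, hyB, hyK⟩
  obtain ⟨k, hkK, hky⟩ := (Metric.infDist_lt_iff hKne).mp hyK
  rcases Set.mem_iUnion₂.mp (hTcover hkK) with ⟨x, hxT, hkx⟩
  refine Set.mem_iUnion₂.mpr ⟨x, hxT, hB, y, hyB, ?_⟩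
  have h1 : dist y x ≤ dist y k + dist k x := dist_triangle y k x
  have h2 : dist k x < 𝓑.eps / 4 := Metric.mem_ball.mp hkx
  linarith

/-! ### Geodesic rays -/

lemma ray_dist {z0 : X} {γ : ℝ → X} (hγ : IsGeodesicRay z0 γ) {s t : ℝ}
    (hs : 0 ≤ s) (ht : 0 ≤ t) : dist (γ s) (γ t) = |s - t| := hγ.2 s hs t ht

lemma ray_continuousOn {z0 : X} {γ : ℝ → X} (hγ : IsGeodesicRay z0 γ) :
    ContinuousOn γ (Set.Ici (0:ℝ)) := by
  have hl : LipschitzOnWith 1 γ (Set.Ici (0:ℝ)) := by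
    apply LipschitzOnWith.of_dist_le_mul
    intro a ha b hb
    rw [ray_dist hγ ha hb, Real.dist_eq]
    simp
  exact hl.continuousOn

/-- The set of times a ray spends in a (convex) block is order-convex. -/
lemma block_interval (𝓑 : BlockDecomposition X Set.univ) {z0 : X} {γ : ℝ → X}
    (hγ : IsGeodesicRay z0 γ) {B : Set X} (hB : B ∈ 𝓑.blocks) {s t u : ℝ}
    (hs : 0 ≤ s) (hsu : s ≤ u) (hut : u ≤ t)
    (hsB : γ s ∈ B) (htB : γ t ∈ B) : γ u ∈ B := by
  have hst : s ≤ t := hsu.trans hut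
  have ht : 0 ≤ t := hs.trans hst
  have hdist : dist (γ s) (γ t) = t - s := by
    rw [ray_dist hγ hs ht, abs_of_nonpos (by linarith)]
    ring
  set σ : ℝ → X := fun w => γ (min (s + w) t) with hσ
  have hseg : IsGeodesicSegment σ (γ s) (γ t) := by
    refine ⟨?_, ?_, ?_⟩
    · show γ (min (s + 0) t) = γ s
      rw [add_zero, min_eq_left hst]
    · intro a ha b hb
      rw [hdist] at ha hb
      have ha' : s + a ≤ t := by linarith [ha.2]
      have hb' : s + b ≤ t := by linarith [hb.2]
      have h0a : (0:ℝ) ≤ s + a := by linarith [ha.1]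
      have h0b : (0:ℝ) ≤ s + b := by linarith [hb.1]
      show dist (γ (min (s + a) t)) (γ (min (s + b) t)) = |a - b|
      rw [min_eq_left ha', min_eq_left hb', ray_dist hγ h0a h0b]
      congr 1
      ring
    · intro w hw
      rw [hdist] at hw
      show γ (min (s + w) t) = γ t
      rw [min_eq_right (by linarith)]
  have hc := 𝓑.convex B hB (γ s) hsB (γ t) htB σ hseg (u - s)
      ⟨by linarith, by rw [hdist]; linarith⟩
  have : min (s + (u - s)) t = u := by
    rw [show s + (u - s) = u by ring, min_eq_left hut]
  rwa [show σ (u - s) = γ (min (s + (u - s)) t) from rfl, this] at hc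

end CKItinerary

namespace CKItinerary

variable {X : Type*} [MetricSpace X]

/-! ### Entries of a ray into blocks, and the entry order -/

lemma entersAt_unique {𝓑 : BlockDecomposition X Set.univ} {γ : ℝ → X} {B B' : Set X} {t : ℝ}
    (h : entersAt 𝓑 γ B t) (h' : entersAt 𝓑 γ B' t) : B = B' := by
  by_contra hne
  exact h.2.2.2 B' h'.2.1 (fun e => hne e.symm) h'.2.2.1

lemma entered_mem_blocks {𝓑 : BlockDecomposition X Set.univ} {γ : ℝ → X} {B : Set X}
    (h : B ∈ enteredBlocks 𝓑 γ) : B ∈ 𝓑.blocks := by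
  obtain ⟨t, ht⟩ := h
  exact ht.2.1

/-- `B` is entered strictly before `B'`. -/
def bLT (𝓑 : BlockDecomposition X Set.univ) (γ : ℝ → X) (B B' : Set X) : Prop :=
  B ≠ B' ∧ ∃ t s : ℝ, entersAt 𝓑 γ B t ∧ entersAt 𝓑 γ B' s ∧ t < s

/-- Separation: if `B` is entered before `B'` somewhere, then every entry of `B`
precedes every entry of `B'`. -/
lemma bLT_lt (𝓑 : BlockDecomposition X Set.univ) {z0 : X} {γ : ℝ → X}
    (hγ : IsGeodesicRay z0 γ) {B B' : Set X} (h : bLT 𝓑 γ B B') :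
    ∀ {t s : ℝ}, entersAt 𝓑 γ B t → entersAt 𝓑 γ B' s → t < s := by
  intro t s ht hs
  obtain ⟨hne, t₀, s₀, ht₀, hs₀, hlt⟩ := h
  by_contra hts
  push_neg at hts
  have hst : s ≠ t := fun he => hne (entersAt_unique (he ▸ hs) ht).symm
  have hs_lt_t : s < t := lt_of_le_of_ne hts hst
  rcases le_or_gt s t₀ with hc | hc
  · have hst₀ : s ≠ t₀ := fun he => hne (entersAt_unique (he ▸ hs) ht₀).symm
    have h1 : s < t₀ := lt_of_le_of_ne hc hst₀
    have : γ t₀ ∈ B' := block_interval 𝓑 hγ hs.2.1 hs.1 h1.le hlt.le hs.2.2.1 hs₀.2.2.1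
    exact ht₀.2.2.2 B' hs.2.1 (fun e => hne e.symm) this
  · have : γ s ∈ B := block_interval 𝓑 hγ ht.2.1 ht₀.1 hc.le hs_lt_t.le ht₀.2.2.1 ht.2.2.1
    exact hs.2.2.2 B ht.2.1 hne this

lemma bLT_total {𝓑 : BlockDecomposition X Set.univ} {γ : ℝ → X} {B B' : Set X}
    (hB : B ∈ enteredBlocks 𝓑 γ) (hB' : B' ∈ enteredBlocks 𝓑 γ) (hne : B ≠ B') :
    bLT 𝓑 γ B B' ∨ bLT 𝓑 γ B' B := by
  obtain ⟨t, ht⟩ := hB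
  obtain ⟨s, hs⟩ := hB'
  have hts : t ≠ s := fun he => hne (entersAt_unique (he ▸ ht) hs)
  rcases lt_or_gt_of_ne hts with h | h
  · exact Or.inl ⟨hne, t, s, ht, hs, h⟩
  · exact Or.inr ⟨fun e => hne e.symm, s, t, hs, ht, h⟩

lemma bLT_asymm (𝓑 : BlockDecomposition X Set.univ) {z0 : X} {γ : ℝ → X}
    (hγ : IsGeodesicRay z0 γ) {B B' : Set X}
    (h : bLT 𝓑 γ B B') (h' : bLT 𝓑 γ B' B) : False := by
  obtain ⟨hne, t, s, ht, hs, hlt⟩ := h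
  exact absurd (bLT_lt 𝓑 hγ h' hs ht) (by linarith)

lemma bLT_trans (𝓑 : BlockDecomposition X Set.univ) {z0 : X} {γ : ℝ → X}
    (hγ : IsGeodesicRay z0 γ) {B B' B'' : Set X}
    (h : bLT 𝓑 γ B B') (h' : bLT 𝓑 γ B' B'') : bLT 𝓑 γ B B'' := by
  obtain ⟨hne, t, s, ht, hs, hlt⟩ := id h
  obtain ⟨hne', t', s', ht', hs', hlt'⟩ := id h'
  have h1 : s < s' := bLT_lt 𝓑 hγ h' hs hs'
  refine ⟨?_, t, s', ht, hs', by linarith⟩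
  intro he
  subst he
  exact bLT_asymm 𝓑 hγ h h'

open scoped Classical in
/-- A chosen entry time for each entered block. -/
noncomputable def etime (𝓑 : BlockDecomposition X Set.univ) (γ : ℝ → X) (B : Set X) : ℝ :=
  if h : ∃ t, entersAt 𝓑 γ B t then h.choose else 0

lemma etime_spec {𝓑 : BlockDecomposition X Set.univ} {γ : ℝ → X} {B : Set X}
    (h : B ∈ enteredBlocks 𝓑 γ) : entersAt 𝓑 γ B (etime 𝓑 γ B) := by
  have h' : ∃ t, entersAt 𝓑 γ B t := h
  rw [etime]
  split
  · exact (‹∃ t, entersAt 𝓑 γ B t›).choose_spec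
  · exact absurd h' (by assumption)

/-- Only finitely many blocks are touched by a ray on a bounded time interval. -/
lemma touched_finite (𝓑 : BlockDecomposition X Set.univ) {z0 : X} {γ : ℝ → X}
    (hγ : IsGeodesicRay z0 γ) {T : ℝ} (hT : 0 ≤ T) :
    {B | B ∈ 𝓑.blocks ∧ ∃ t, 0 ≤ t ∧ t ≤ T ∧ γ t ∈ B}.Finite := by
  have hKcp : IsCompact (γ '' Set.Icc 0 T) :=
    (isCompact_Icc).image_of_continuousOn ((ray_continuousOn hγ).mono
      (fun x hx => hx.1))
  have hKne : (γ '' Set.Icc 0 T).Nonempty := ⟨γ 0, 0, ⟨le_rfl, hT⟩, rfl⟩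
  apply Set.Finite.subset (finite_near 𝓑 hKcp hKne)
  rintro B ⟨hB, t, ht0, htT, htB⟩
  refine ⟨hB, γ t, htB, ?_⟩
  have : Metric.infDist (γ t) (γ '' Set.Icc 0 T) = 0 :=
    Metric.infDist_zero_of_mem ⟨t, ⟨ht0, htT⟩, rfl⟩
  rw [this]
  linarith [𝓑.eps_pos]

/-- Only finitely many blocks are entered before a given block. -/
lemma below_finite (𝓑 : BlockDecomposition X Set.univ) {z0 : X} {γ : ℝ → X}
    (hγ : IsGeodesicRay z0 γ) {B : Set X} (hB : B ∈ enteredBlocks 𝓑 γ) :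
    {C | C ∈ enteredBlocks 𝓑 γ ∧ bLT 𝓑 γ C B}.Finite := by
  have hBent := etime_spec hB
  apply Set.Finite.subset (touched_finite 𝓑 hγ hBent.1)
  rintro C ⟨hC, hCB⟩
  have hCent := etime_spec hC
  exact ⟨hCent.2.1, etime 𝓑 γ C, hCent.1, (bLT_lt 𝓑 hγ hCB hCent hBent).le,
    hCent.2.2.1⟩

/-- If a ray eventually stays in a single block, it enters only finitely many blocks. -/
lemma finite_of_tail (𝓑 : BlockDecomposition X Set.univ) {z0 : X} {γ : ℝ → X}
    (hγ : IsGeodesicRay z0 γ) {B : Set X} {T : ℝ} (hB : B ∈ 𝓑.blocks) (hT : 0 ≤ T)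
    (h : ∀ t, T ≤ t → γ t ∈ B) : (enteredBlocks 𝓑 γ).Finite := by
  apply Set.Finite.subset ((touched_finite 𝓑 hγ hT).union (Set.finite_singleton B))
  rintro C ⟨t, htC⟩
  rcases le_or_gt t T with hle | hlt
  · exact Or.inl ⟨htC.2.1, t, htC.1, hle, htC.2.2.1⟩
  · right
    by_contra hne
    exact htC.2.2.2 B hB (fun e => (hne (Set.mem_singleton_iff.mpr e.symm))) (h t hlt.le)

end CKItinerary

namespace CKItinerary

variable {X : Type*} [MetricSpace X]

/-! ### Prefix sets of the itinerary -/

/-- An initial segment of the itinerary of `γ`: a finite, downward-closed (for the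
entry order) set of entered blocks. -/
def IsPrefixSet (𝓑 : BlockDecomposition X Set.univ) (γ : ℝ → X) (S : Set (Set X)) : Prop :=
  S.Finite ∧ (∀ B ∈ S, B ∈ enteredBlocks 𝓑 γ) ∧
    ∀ C ∈ enteredBlocks 𝓑 γ, ∀ B ∈ S, bLT 𝓑 γ C B → C ∈ S

lemma prefix_empty (𝓑 : BlockDecomposition X Set.univ) (γ : ℝ → X) :
    IsPrefixSet 𝓑 γ ∅ :=
  ⟨Set.finite_empty, fun _ h => absurd h (Set.notMem_empty _),
    fun _ _ B hB => absurd hB (Set.notMem_empty _)⟩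

lemma ncard_lt_of_prefix_diff {𝓑 : BlockDecomposition X Set.univ} {z0 : X} {γ : ℝ → X}
    (hγ : IsGeodesicRay z0 γ) {S T : Set (Set X)}
    (hS : IsPrefixSet 𝓑 γ S) (hT : IsPrefixSet 𝓑 γ T)
    {B : Set X} (hBS : B ∈ S) (hBT : B ∉ T) : T.ncard < S.ncard := by
  have hTS : T ⊆ S := by
    intro C hCT
    have hCB : C ≠ B := fun e => hBT (e ▸ hCT)
    rcases bLT_total (hT.2.1 C hCT) (hS.2.1 B hBS) hCB with h | h
    · exact hS.2.2 C (hT.2.1 C hCT) B hBS h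
    · exact absurd (hT.2.2 B (hS.2.1 B hBS) C hCT h) hBT
  exact Set.ncard_lt_ncard ⟨hTS, fun hsub => hBT (hsub hBS)⟩ hS.1

lemma prefix_unique {𝓑 : BlockDecomposition X Set.univ} {z0 : X} {γ : ℝ → X}
    (hγ : IsGeodesicRay z0 γ) {S T : Set (Set X)}
    (hS : IsPrefixSet 𝓑 γ S) (hT : IsPrefixSet 𝓑 γ T)
    (h : S.ncard = T.ncard) : S = T := by
  by_cases hsub : S ⊆ T
  · exact Set.eq_of_subset_of_ncard_le hsub (le_of_eq h.symm) hT.1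
  · obtain ⟨B, hBS, hBT⟩ := Set.not_subset.mp hsub
    exact absurd (ncard_lt_of_prefix_diff hγ hS hT hBS hBT) (by omega)

/-- A finite nonempty set of entered blocks has a maximum for the entry order. -/
lemma exists_max (𝓑 : BlockDecomposition X Set.univ) {z0 : X} {γ : ℝ → X}
    (hγ : IsGeodesicRay z0 γ) {S : Set (Set X)} (hfin : S.Finite) (hne : S.Nonempty)
    (hent : ∀ B ∈ S, B ∈ enteredBlocks 𝓑 γ) :
    ∃ F ∈ S, ∀ B ∈ S, B ≠ F → bLT 𝓑 γ B F := by
  obtain ⟨F, hF, hmax⟩ : ∃ F ∈ S, ∀ B ∈ S, etime 𝓑 γ F ≤ etime 𝓑 γ B →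
      etime 𝓑 γ F = etime 𝓑 γ B := by
    obtain ⟨F, hF, h⟩ := Set.Finite.exists_maximalFor (fun B => etime 𝓑 γ B) S hfin hne
    exact ⟨F, hF, fun B hB hle => le_antisymm hle (h hB hle)⟩
  refine ⟨F, hF, ?_⟩
  intro B hB hBF
  rcases bLT_total (hent B hB) (hent F hF) hBF with h | h
  · exact h
  · have h1 : etime 𝓑 γ F < etime 𝓑 γ B :=
      bLT_lt 𝓑 hγ h (etime_spec (hent F hF)) (etime_spec (hent B hB))
    exact absurd (hmax B hB h1.le) (by intro e; rw [e] at h1; exact lt_irrefl _ h1)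

/-- Any finite downward-closed set can be shrunk to a prefix set of any smaller size. -/
lemma prefix_shrink (𝓑 : BlockDecomposition X Set.univ) {z0 : X} {γ : ℝ → X}
    (hγ : IsGeodesicRay z0 γ) :
    ∀ (d : ℕ) {M : Set (Set X)}, IsPrefixSet 𝓑 γ M → ∀ (j : ℕ), M.ncard = j + d →
      ∃ S, S ⊆ M ∧ IsPrefixSet 𝓑 γ S ∧ S.ncard = j := by
  intro d
  induction d with
  | zero => exact fun hM j hj => ⟨_, subset_rfl, hM, by omega⟩
  | succ d ih =>
    intro M hM j hj
    have hMne : M.Nonempty := Set.nonempty_of_ncard_ne_zero (by omega)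
    obtain ⟨F, hF, hmax⟩ := exists_max 𝓑 hγ hM.1 hMne hM.2.1
    have hM' : IsPrefixSet 𝓑 γ (M \ {F}) := by
      refine ⟨hM.1.diff, fun B hB => hM.2.1 B hB.1, ?_⟩
      intro C hC B hB hCB
      have hCM : C ∈ M := hM.2.2 C hC B hB.1 hCB
      refine ⟨hCM, ?_⟩
      intro hCF
      rw [Set.mem_singleton_iff] at hCF
      subst hCF
      have hBF : B ≠ C := fun e => by
        rw [e] at hB; exact hB.2 rfl
      exact bLT_asymm 𝓑 hγ hCB (hmax B hB.1 (by
        intro e; exact hB.2 (Set.mem_singleton_iff.mpr e)))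
    have hcard : (M \ {F}).ncard = j + d := by
      rw [Set.ncard_diff_singleton_of_mem hF]
      omega
    exact (ih hM' j hcard).imp (fun S hS => ⟨hS.1.trans Set.diff_subset, hS.2⟩)

/-- If the itinerary is infinite, prefix sets of every size exist. -/
lemma prefix_exists (𝓑 : BlockDecomposition X Set.univ) {z0 : X} {γ : ℝ → X}
    (hγ : IsGeodesicRay z0 γ) (hInf : (enteredBlocks 𝓑 γ).Infinite) (k : ℕ) :
    ∃ S, IsPrefixSet 𝓑 γ S ∧ S.ncard = k := by
  induction k with
  | zero => exact ⟨∅, prefix_empty 𝓑 γ, Set.ncard_empty _⟩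
  | succ k ih =>
    obtain ⟨S, hS, hcard⟩ := ih
    obtain ⟨C, hCent, hCS⟩ := (hInf.diff hS.1).nonempty
    set M : Set (Set X) := S ∪ insert C {C' | C' ∈ enteredBlocks 𝓑 γ ∧ bLT 𝓑 γ C' C}
      with hMdef
    have hMfin : M.Finite := hS.1.union (((below_finite 𝓑 hγ hCent)).insert C)
    have hMprefix : IsPrefixSet 𝓑 γ M := by
      refine ⟨hMfin, ?_, ?_⟩
      · rintro B (hB | hB)
        · exact hS.2.1 B hB
        · rcases hB with rfl | hB
          · exact hCent
          · exact hB.1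
      · intro C'' hC'' B hB hlt
        rcases hB with hB | hB
        · exact Or.inl (hS.2.2 C'' hC'' B hB hlt)
        · rcases hB with rfl | hB
          · exact Or.inr (Set.mem_insert_iff.mpr (Or.inr ⟨hC'', hlt⟩))
          · exact Or.inr (Set.mem_insert_iff.mpr
              (Or.inr ⟨hC'', bLT_trans 𝓑 hγ hlt hB.2⟩))
    have hcard' : k + 1 ≤ M.ncard := by
      have hsub : insert C S ⊆ M := by
        rintro B (rfl | hB)
        · exact Or.inr (Set.mem_insert _ _)
        · exact Or.inl hB
      calc k + 1 = (insert C S).ncard := by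
            rw [Set.ncard_insert_of_notMem hCS hS.1, hcard]
        _ ≤ M.ncard := Set.ncard_le_ncard hsub hMfin
    obtain ⟨d, hd⟩ : ∃ d, M.ncard = (k + 1) + d := ⟨M.ncard - (k+1), by omega⟩
    obtain ⟨S', _, hS', hcard''⟩ := prefix_shrink 𝓑 hγ d hMprefix (k+1) hd
    exact ⟨S', hS', hcard''⟩

/-! ### Ranks via downward closures -/

/-- The downward closure of an entered block. -/
def dcSet (𝓑 : BlockDecomposition X Set.univ) (γ : ℝ → X) (B : Set X) : Set (Set X) :=
  insert B {C | C ∈ enteredBlocks 𝓑 γ ∧ bLT 𝓑 γ C B}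

lemma dc_prefix (𝓑 : BlockDecomposition X Set.univ) {z0 : X} {γ : ℝ → X}
    (hγ : IsGeodesicRay z0 γ) {B : Set X} (hB : B ∈ enteredBlocks 𝓑 γ) :
    IsPrefixSet 𝓑 γ (dcSet 𝓑 γ B) := by
  refine ⟨(below_finite 𝓑 hγ hB).insert B, ?_, ?_⟩
  · rintro C (rfl | hC)
    · exact hB
    · exact hC.1
  · intro C hC B' hB' hlt
    rcases hB' with rfl | hB'
    · exact Set.mem_insert_iff.mpr (Or.inr ⟨hC, hlt⟩)
    · exact Set.mem_insert_iff.mpr (Or.inr ⟨hC, bLT_trans 𝓑 hγ hlt hB'.2⟩)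

lemma mem_dcSet_self (𝓑 : BlockDecomposition X Set.univ) (γ : ℝ → X) (B : Set X) :
    B ∈ dcSet 𝓑 γ B := Set.mem_insert _ _

lemma dc_lt_of_bLT (𝓑 : BlockDecomposition X Set.univ) {z0 : X} {γ : ℝ → X}
    (hγ : IsGeodesicRay z0 γ) {B B' : Set X}
    (hB : B ∈ enteredBlocks 𝓑 γ) (hB' : B' ∈ enteredBlocks 𝓑 γ)
    (h : bLT 𝓑 γ B B') : (dcSet 𝓑 γ B).ncard < (dcSet 𝓑 γ B').ncard := by
  have hsub : dcSet 𝓑 γ B ⊆ dcSet 𝓑 γ B' := by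
    rintro C (rfl | hC)
    · exact Set.mem_insert_iff.mpr (Or.inr ⟨hB, h⟩)
    · exact Set.mem_insert_iff.mpr (Or.inr ⟨hC.1, bLT_trans 𝓑 hγ hC.2 h⟩)
  have hmem : B' ∉ dcSet 𝓑 γ B := by
    rintro (rfl | hC)
    · exact h.1 rfl
    · exact bLT_asymm 𝓑 hγ h hC.2
  exact Set.ncard_lt_ncard ⟨hsub, fun hsup => hmem (hsup (mem_dcSet_self 𝓑 γ B'))⟩
    ((below_finite 𝓑 hγ hB').insert B')

lemma bLT_of_dc_lt (𝓑 : BlockDecomposition X Set.univ) {z0 : X} {γ : ℝ → X}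
    (hγ : IsGeodesicRay z0 γ) {B B' : Set X}
    (hB : B ∈ enteredBlocks 𝓑 γ) (hB' : B' ∈ enteredBlocks 𝓑 γ)
    (h : (dcSet 𝓑 γ B).ncard < (dcSet 𝓑 γ B').ncard) : bLT 𝓑 γ B B' := by
  rcases eq_or_ne B B' with rfl | hne
  · exact absurd h (lt_irrefl _)
  rcases bLT_total hB hB' hne with h' | h'
  · exact h'
  · exact absurd (dc_lt_of_bLT 𝓑 hγ hB' hB h') (by omega)

end CKItinerary

namespace CKItinerary

variable {X : Type*} [MetricSpace X]

/-! ### The cone topology: uniform-closeness neighborhoods -/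

lemma generator_isOpen {z0 : X} (ξ : VisualBoundary X z0) {r D : ℝ} (hr : 0 < r)
    (hD : 0 < D) :
    IsOpen {η : VisualBoundary X z0 | dist (ξ.1 r) (η.1 r) < D} :=
  TopologicalSpace.GenerateOpen.basic _ ⟨ξ, r, D, hr, hD, rfl⟩

lemma close_nbhd {z0 : X} (ξ : VisualBoundary X z0) (R : ℝ) {δ : ℝ} (hδ : 0 < δ) :
    ∃ 𝒰 : Set (VisualBoundary X z0), IsOpen 𝒰 ∧ ξ ∈ 𝒰 ∧
      ∀ η ∈ 𝒰, ∀ t ∈ Set.Icc (0:ℝ) R, dist (ξ.1 t) (η.1 t) ≤ δ := by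
  set D := δ / 3 with hDdef
  have hD : 0 < D := by positivity
  set N : ℕ := ⌈R / D⌉₊ with hNdef
  refine ⟨⋂ i ∈ Finset.range N, {η : VisualBoundary X z0 |
      dist (ξ.1 ((i + 1) * D)) (η.1 ((i + 1) * D)) < D}, ?_, ?_, ?_⟩
  · exact isOpen_biInter_finset (fun i _ => generator_isOpen ξ (by positivity) hD)
  · refine Set.mem_iInter₂.mpr (fun i _ => ?_)
    simpa using hD
  · intro η hη t ht
    rcases eq_or_lt_of_le ht.1 with h0 | h0
    · rw [← h0, ξ.2.1, η.2.1, dist_self]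
      exact hδ.le
    · set j : ℕ := ⌈t / D⌉₊ with hjdef
      have hj1 : 0 < j := Nat.ceil_pos.mpr (div_pos h0 hD)
      have hjN : j ≤ N := Nat.ceil_le_ceil (by gcongr; exact ht.2)
      have hle : t / D ≤ (j : ℝ) := Nat.le_ceil (t / D)
      have hg1 : t ≤ (j : ℝ) * D := by
        rw [div_le_iff₀ hD] at hle
        exact hle
      have hlt : ((j : ℕ) : ℝ) < t / D + 1 := Nat.ceil_lt_add_one (by positivity)
      have hg2 : (j : ℝ) * D < t + D := by
        rw [div_add' _ _ _ hD.ne', lt_div_iff₀ hD] at hlt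
        linarith [hlt]
      have hmem := Set.mem_iInter₂.mp hη (j - 1) (Finset.mem_range.mpr (by omega))
      have hcast : ((j - 1 : ℕ) : ℝ) + 1 = (j : ℝ) := by
        have h1 : (1:ℕ) ≤ j := hj1
        push_cast [h1]
        ring
      rw [hcast] at hmem
      have hg0 : (0:ℝ) ≤ (j:ℝ) * D := by positivity
      have ht0 : (0:ℝ) ≤ t := ht.1
      have d1 : dist (ξ.1 t) (ξ.1 ((j:ℝ) * D)) = |t - (j:ℝ) * D| := ray_dist ξ.2 ht0 hg0
      have d2 : dist (η.1 ((j:ℝ) * D)) (η.1 t) = |(j:ℝ) * D - t| := ray_dist η.2 hg0 ht0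
      have habs : |t - (j:ℝ) * D| ≤ D := by
        rw [abs_le]; constructor <;> linarith
      have habs2 : |(j:ℝ) * D - t| ≤ D := by
        rw [abs_le]; constructor <;> linarith
      calc dist (ξ.1 t) (η.1 t)
          ≤ dist (ξ.1 t) (ξ.1 ((j:ℝ) * D)) + dist (ξ.1 ((j:ℝ) * D)) (η.1 ((j:ℝ) * D))
            + dist (η.1 ((j:ℝ) * D)) (η.1 t) := dist_triangle4 _ _ _ _
        _ ≤ D + D + D := by
            rw [d1, d2]
            exact add_le_add (add_le_add habs hmem.le) habs2
        _ = δ := by rw [hDdef]; ring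

lemma nbhd_of_continuousOn {z0 : X} {c : ℝ → VisualBoundary X z0}
    (hc : ContinuousOn c (Set.Icc 0 1)) {u : ℝ} (hu : u ∈ Set.Icc (0:ℝ) 1)
    {𝒰 : Set (VisualBoundary X z0)} (ho : IsOpen 𝒰) (hmem : c u ∈ 𝒰) :
    ∃ O : Set ℝ, IsOpen O ∧ u ∈ O ∧ ∀ v ∈ Set.Icc (0:ℝ) 1 ∩ O, c v ∈ 𝒰 := by
  have h1 : c ⁻¹' 𝒰 ∈ nhdsWithin u (Set.Icc 0 1) := (hc u hu) (ho.mem_nhds hmem)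
  obtain ⟨O, hOo, hOu, hsub⟩ := mem_nhdsWithin.mp h1
  exact ⟨O, hOo, hOu, fun v hv => hsub ⟨hv.2, hv.1⟩⟩

/-! ### Exclusivity is an open condition -/

lemma excl_ball (𝓑 : BlockDecomposition X Set.univ) {x : X} {B : Set X}
    (hB : B ∈ 𝓑.blocks) (hxB : x ∈ B)
    (hexcl : ∀ B' ∈ 𝓑.blocks, B' ≠ B → x ∉ B') :
    ∃ ρ > 0, ∀ y, dist y x < ρ → y ∈ B ∧ ∀ B' ∈ 𝓑.blocks, B' ≠ B → y ∉ B' := by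
  classical
  have heps := 𝓑.eps_pos
  set 𝒩 : Set (Set X) := {C | C ∈ 𝓑.blocks ∧ C ≠ B ∧ ∃ y ∈ C, dist y x < 𝓑.eps}
    with h𝒩
  have hsub : 𝒩.Subsingleton := by
    intro C₁ h₁ C₂ h₂
    by_contra hne
    exact near_two 𝓑 x h₁.1 h₂.1 hB hne h₁.2.1 h₂.2.1 h₁.2.2 h₂.2.2
      ⟨x, hxB, by simpa using heps⟩
  rcases Set.eq_empty_or_nonempty 𝒩 with hemp | ⟨D, hD⟩
  · refine ⟨𝓑.eps, heps, ?_⟩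
    intro y hy
    obtain ⟨C, hC, hyC⟩ := exists_block 𝓑 y
    have hCB : C = B := by
      by_contra hne
      have : C ∈ 𝒩 := ⟨hC, hne, y, hyC, hy⟩
      rw [hemp] at this
      exact Set.notMem_empty C this
    subst hCB
    refine ⟨hyC, ?_⟩
    intro B' hB' hne hyB'
    have : B' ∈ 𝒩 := ⟨hB', hne, y, hyB', hy⟩
    rw [hemp] at this
    exact Set.notMem_empty B' this
  · have hxD : x ∉ D := hexcl D hD.1 hD.2.1
    have hDne : D.Nonempty := 𝓑.nonempty_blocks D hD.1
    have hDcl : IsClosed D := 𝓑.closed D hD.1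
    have hpos : 0 < Metric.infDist x D :=
      (IsClosed.notMem_iff_infDist_pos hDcl hDne).mp hxD
    refine ⟨min 𝓑.eps (Metric.infDist x D), lt_min heps hpos, ?_⟩
    intro y hy
    have hy1 : dist y x < 𝓑.eps := hy.trans_le (min_le_left _ _)
    have hyD : y ∉ D := by
      intro hyD
      have h2 : Metric.infDist x D ≤ dist x y := Metric.infDist_le_dist_of_mem hyD
      rw [dist_comm] at h2
      exact absurd (hy.trans_le (min_le_right _ _)) (not_lt.mpr h2)
    obtain ⟨C, hC, hyC⟩ := exists_block 𝓑 y
    have hCB : C = B := by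
      by_contra hne
      have hmem : C ∈ 𝒩 := ⟨hC, hne, y, hyC, hy1⟩
      rw [hsub hmem hD] at hyC
      exact hyD hyC
    subst hCB
    refine ⟨hyC, ?_⟩
    intro B' hB' hne hyB'
    have hmem : B' ∈ 𝒩 := ⟨hB', hne, y, hyB', hy1⟩
    rw [hsub hmem hD] at hyB'
    exact hyD hyB'

/-! ### Gluing along the connected interval -/

lemma glue {P : ℝ → Prop}
    (hloc : ∀ u ∈ Set.Icc (0:ℝ) 1, ∃ O, IsOpen O ∧ u ∈ O ∧
      ((∀ v ∈ Set.Icc (0:ℝ) 1 ∩ O, P v) ∨ (∀ v ∈ Set.Icc (0:ℝ) 1 ∩ O, ¬ P v)))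
    (h0 : P 0) : ∀ t ∈ Set.Icc (0:ℝ) 1, P t := by
  by_contra hcon
  push_neg at hcon
  obtain ⟨t₁, ht₁, ht₁P⟩ := hcon
  set U1 := ⋃₀ {O | IsOpen O ∧ ∀ v ∈ Set.Icc (0:ℝ) 1 ∩ O, P v} with hU1def
  set U2 := ⋃₀ {O | IsOpen O ∧ ∀ v ∈ Set.Icc (0:ℝ) 1 ∩ O, ¬ P v} with hU2def
  have hU1 : IsOpen U1 := isOpen_sUnion (fun O hO => hO.1)
  have hU2 : IsOpen U2 := isOpen_sUnion (fun O hO => hO.1)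
  have hmemside : ∀ u ∈ Set.Icc (0:ℝ) 1, u ∈ U1 ∪ U2 := by
    intro u hu
    obtain ⟨O, hOo, hOu, hOP⟩ := hloc u hu
    rcases hOP with h | h
    · exact Or.inl ⟨O, ⟨hOo, h⟩, hOu⟩
    · exact Or.inr ⟨O, ⟨hOo, h⟩, hOu⟩
  have h0I : (0:ℝ) ∈ Set.Icc (0:ℝ) 1 := ⟨le_rfl, zero_le_one⟩
  have h0mem : (0:ℝ) ∈ U1 := by
    obtain ⟨O, hOo, hOu, hOP⟩ := hloc 0 h0I
    rcases hOP with h | h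
    · exact ⟨O, ⟨hOo, h⟩, hOu⟩
    · exact absurd h0 (h 0 ⟨h0I, hOu⟩)
  have ht₁mem : t₁ ∈ U2 := by
    obtain ⟨O, hOo, hOu, hOP⟩ := hloc t₁ ht₁
    rcases hOP with h | h
    · exact absurd (h t₁ ⟨ht₁, hOu⟩) ht₁P
    · exact ⟨O, ⟨hOo, h⟩, hOu⟩
  obtain ⟨w, hwI, hw1, hw2⟩ := isPreconnected_Icc U1 U2 hU1 hU2
      (fun x hx => hmemside x hx) ⟨0, h0I, h0mem⟩ ⟨t₁, ht₁, ht₁mem⟩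
  obtain ⟨O, hO, hwO⟩ := hw1
  obtain ⟨O', hO', hwO'⟩ := hw2
  exact hO'.2 w ⟨hwI, hwO'⟩ (hO.2 w ⟨hwI, hwO⟩)

end CKItinerary

namespace CKItinerary

variable {X : Type*} [MetricSpace X]

lemma pos_min_over {α : Type*} {S : Set α} (hS : S.Finite) (f : α → ℝ)
    (hf : ∀ a ∈ S, 0 < f a) : ∃ m > 0, ∀ a ∈ S, m ≤ f a := by
  rcases Set.eq_empty_or_nonempty S with rfl | hne
  · exact ⟨1, one_pos, by simp⟩
  · obtain ⟨a, haS, hmin⟩ : ∃ a ∈ S, ∀ b ∈ S, f b ≤ f a → f a = f b := by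
      obtain ⟨a, haS, h⟩ := Set.Finite.exists_minimalFor f S hS hne
      exact ⟨a, haS, fun b hb hle => le_antisymm (h hb hle) hle⟩
    refine ⟨f a, hf a haS, ?_⟩
    intro b hb
    by_contra hcon
    push_neg at hcon
    have := hmin b hb hcon.le
    rw [this] at hcon
    exact lt_irrefl _ hcon

/-- Exclusion, separated case: if `γ` avoids `C` on `[0,τ]`, then so does any
uniformly close ray. -/
lemma EX1 (𝓑 : BlockDecomposition X Set.univ) {z0 : X} {γ : ℝ → X}
    (hγ : IsGeodesicRay z0 γ) {C : Set X} (hC : C ∈ 𝓑.blocks) {τ : ℝ} (hτ : 0 ≤ τ)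
    (hsep : ∀ σ ∈ Set.Icc (0:ℝ) τ, γ σ ∉ C) :
    ∃ δ > 0, ∀ γ' : ℝ → X, (∀ s ∈ Set.Icc (0:ℝ) τ, dist (γ' s) (γ s) ≤ δ) →
      ∀ σ ∈ Set.Icc (0:ℝ) τ, γ' σ ∉ C := by
  have hCne := 𝓑.nonempty_blocks C hC
  have hCcl := 𝓑.closed C hC
  have hcont : ContinuousOn (fun σ => Metric.infDist (γ σ) C) (Set.Icc 0 τ) :=
    (Metric.continuous_infDist_pt C).comp_continuousOn
      ((ray_continuousOn hγ).mono (fun x hx => hx.1))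
  obtain ⟨σ₀, hσ₀, hmin'⟩ := isCompact_Icc.exists_isMinOn ⟨0, le_rfl, hτ⟩ hcont
  have hmin := isMinOn_iff.mp hmin'
  have hμpos : 0 < Metric.infDist (γ σ₀) C :=
    (IsClosed.notMem_iff_infDist_pos hCcl hCne).mp (hsep σ₀ hσ₀)
  refine ⟨Metric.infDist (γ σ₀) C / 2, by positivity, ?_⟩
  intro γ' hclose σ hσ hmem
  have h1 : Metric.infDist (γ σ) C ≤ dist (γ σ) (γ' σ) :=
    Metric.infDist_le_dist_of_mem hmem
  rw [dist_comm] at h1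
  have h2 := hclose σ hσ
  have h3 := hmin σ hσ
  linarith

/-- Exclusion, wall case: if `γ` touches `C` but never enters it (it travels along a
wall `C ∩ D`), then no uniformly close ray can enter `C` at time `≤ τ`. -/
lemma EX2 (𝓑 : BlockDecomposition X Set.univ) {z0 : X}
    (hz0 : ∀ W, IsWall 𝓑 W → z0 ∉ W) {γ : ℝ → X} (hγ : IsGeodesicRay z0 γ)
    (hInf : (enteredBlocks 𝓑 γ).Infinite)
    {C : Set X} (hC : C ∈ 𝓑.blocks) (hCent : C ∉ enteredBlocks 𝓑 γ)
    {σ₀ : ℝ} (hσ₀0 : 0 ≤ σ₀) (hσ₀C : γ σ₀ ∈ C) {τ : ℝ} (hτ : 0 ≤ τ) :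
    ∃ δ > 0, ∃ R, τ ≤ R ∧ ∀ γ' : ℝ → X, IsGeodesicRay z0 γ' →
      (∀ s ∈ Set.Icc (0:ℝ) R, dist (γ' s) (γ s) ≤ δ) →
      ∀ σ ∈ Set.Icc (0:ℝ) τ, ¬ entersAt 𝓑 γ' C σ := by
  classical
  have heps := 𝓑.eps_pos
  set I : Set ℝ := {t | 0 ≤ t ∧ γ t ∈ C} with hIdef
  have hIne : I.Nonempty := ⟨σ₀, hσ₀0, hσ₀C⟩
  by_cases hbdd : BddAbove I
  case neg =>
    exfalso
    have htail : ∀ t, σ₀ ≤ t → γ t ∈ C := by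
      intro t ht
      obtain ⟨w, hwI, hw⟩ := not_bddAbove_iff.mp hbdd t
      exact block_interval 𝓑 hγ hC hσ₀0 ht hw.le hσ₀C hwI.2
    exact hInf (finite_of_tail 𝓑 hγ hC hσ₀0 htail)
  case pos =>
  have hIcl : IsClosed I := by
    have h1 : IsClosed (Set.Ici (0:ℝ) ∩ γ ⁻¹' C) :=
      (ray_continuousOn hγ).preimage_isClosed_of_isClosed isClosed_Ici (𝓑.closed C hC)
    convert h1 using 1
    rw [hIdef]; rfl
  have hBddBelow : BddBelow I := ⟨0, fun t ht => ht.1⟩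
  set α := sInf I with hα
  set β := sSup I with hβ
  have hαI : α ∈ I := hIcl.csInf_mem hIne hBddBelow
  have hβI : β ∈ I := hIcl.csSup_mem hIne hbdd
  have hαβ : α ≤ β := csInf_le_csSup hIne hBddBelow hbdd
  have hIeq : I = Set.Icc α β := by
    apply Set.Subset.antisymm
    · exact fun t ht => ⟨csInf_le hBddBelow ht, le_csSup hbdd ht⟩
    · intro t ht
      exact ⟨hαI.1.trans ht.1, block_interval 𝓑 hγ hC hαI.1 ht.1 ht.2 hαI.2 hβI.2⟩
  have hmemI : ∀ s ∈ Set.Icc α β, γ s ∈ C := by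
    intro s hs
    have : s ∈ I := by rw [hIeq]; exact hs
    exact this.2
  have hmem0 : ∀ s ∈ Set.Icc α β, (0:ℝ) ≤ s := fun s hs => hαI.1.trans hs.1
  have hcomp : ∀ s ∈ Set.Icc α β, ∃ D ∈ 𝓑.blocks, D ≠ C ∧ γ s ∈ D := by
    intro s hs
    have hnent : ¬ entersAt 𝓑 γ C s := fun h => hCent ⟨s, h⟩
    rw [entersAt] at hnent
    push_neg at hnent
    obtain ⟨D, hD, hDC, hγD⟩ := hnent (hmem0 s hs) hC (hmemI s hs)
    exact ⟨D, hD, hDC, hγD⟩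
  have hα0 : 0 < α := by
    rcases lt_or_eq_of_le hαI.1 with h | h
    · exact h
    · exfalso
      obtain ⟨D, hD, hDC, hzD⟩ := hcomp α ⟨le_rfl, hαβ⟩
      have hzC : z0 ∈ C := by rw [← hγ.1, h]; exact hαI.2
      have hzD' : z0 ∈ D := by rw [← hγ.1, h]; exact hzD
      exact hz0 (C ∩ D) ⟨C, hC, D, hD, (fun e => hDC e.symm), rfl, ⟨z0, hzC, hzD'⟩⟩
        ⟨hzC, hzD'⟩
  obtain ⟨D, hD, hDC, hβD⟩ := hcomp β ⟨hαβ, le_rfl⟩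
  have hCD : C ≠ D := fun e => hDC e.symm
  -- the companion block is constant along the wall
  have hCLAIM : ∀ s ∈ Set.Icc α β, γ s ∈ D := by
    by_contra hcon
    push_neg at hcon
    obtain ⟨s₁, hs₁, hs₁D⟩ := hcon
    set T1 : Set ℝ := {s | s ∈ Set.Icc α β ∧ γ s ∈ D} with hT1
    set T2 : Set ℝ := {s | s ∈ Set.Icc α β ∧ γ s ∉ D} with hT2
    have hstep1 : ∀ s ∈ T1, ∀ s' ∈ Set.Icc α β, |s' - s| < 𝓑.eps → γ s' ∈ D := by
      intro s hs s' hs' hd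
      obtain ⟨D', hD', hD'C, hγD'⟩ := hcomp s' hs'
      by_cases hDD : D' = D
      · exact hDD ▸ hγD'
      · exfalso
        refine near_two 𝓑 (γ s) hC hD hD' hCD (fun e => hD'C e.symm)
          (fun e => hDD e.symm) ⟨γ s, hmemI s hs.1, by simpa using heps⟩
          ⟨γ s, hs.2, by simpa using heps⟩ ⟨γ s', hγD', ?_⟩
        rw [ray_dist hγ (hmem0 s' hs') (hmem0 s hs.1)]
        exact hd
    have hstep2 : ∀ s ∈ T2, ∀ s' ∈ Set.Icc α β, |s' - s| < 𝓑.eps → γ s' ∉ D := by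
      intro s hs s' hs' hd hmem
      obtain ⟨Ds, hDs, hDsC, hγDs⟩ := hcomp s hs.1
      have hDsD : Ds ≠ D := fun e => hs.2 (e ▸ hγDs)
      refine near_two 𝓑 (γ s) hC hDs hD (fun e => hDsC e.symm) hCD hDsD
        ⟨γ s, hmemI s hs.1, by simpa using heps⟩
        ⟨γ s, hγDs, by simpa using heps⟩ ⟨γ s', hmem, ?_⟩
      rw [ray_dist hγ (hmem0 s' hs') (hmem0 s hs.1)]
      exact hd
    set U1 : Set ℝ := ⋃ s ∈ T1, Set.Ioo (s - 𝓑.eps) (s + 𝓑.eps) with hU1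
    set U2 : Set ℝ := ⋃ s ∈ T2, Set.Ioo (s - 𝓑.eps) (s + 𝓑.eps) with hU2
    have hU1o : IsOpen U1 := isOpen_biUnion (fun s _ => isOpen_Ioo)
    have hU2o : IsOpen U2 := isOpen_biUnion (fun s _ => isOpen_Ioo)
    have hcover : Set.Icc α β ⊆ U1 ∪ U2 := by
      intro s hs
      by_cases hmem : γ s ∈ D
      · exact Or.inl (Set.mem_biUnion (⟨hs, hmem⟩ : s ∈ T1)
          ⟨by linarith, by linarith⟩)
      · exact Or.inr (Set.mem_biUnion (⟨hs, hmem⟩ : s ∈ T2)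
          ⟨by linarith, by linarith⟩)
    obtain ⟨w, hwIcc, hw1, hw2⟩ := isPreconnected_Icc U1 U2 hU1o hU2o hcover
        ⟨β, ⟨hαβ, le_rfl⟩, Set.mem_biUnion (⟨⟨hαβ, le_rfl⟩, hβD⟩ : β ∈ T1)
          ⟨by linarith, by linarith⟩⟩
        ⟨s₁, hs₁, Set.mem_biUnion (⟨hs₁, hs₁D⟩ : s₁ ∈ T2)
          ⟨by linarith, by linarith⟩⟩
    obtain ⟨s, hsT1, hws⟩ := Set.mem_iUnion₂.mp hw1
    obtain ⟨s', hsT2, hws'⟩ := Set.mem_iUnion₂.mp hw2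
    have h1 : γ w ∈ D := hstep1 s hsT1 w hwIcc
      (abs_sub_lt_iff.mpr ⟨by linarith [hws.1, hws.2], by linarith [hws.1, hws.2]⟩)
    have h2 : γ w ∉ D := hstep2 s' hsT2 w hwIcc
      (abs_sub_lt_iff.mpr ⟨by linarith [hws'.1, hws'.2], by linarith [hws'.1, hws'.2]⟩)
    exact h2 h1
  -- exclusive entries of the companion on either side of the wall
  have hprehalf : 0 < min 𝓑.eps α := lt_min heps hα0
  set h0 : ℝ := min 𝓑.eps α / 2 with hh0
  have hh0pos : 0 < h0 := by rw [hh0]; positivity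
  set sm := α - h0 with hsmdef
  set sp := β + 𝓑.eps / 2 with hspdef
  have hh0α : h0 ≤ α / 2 := by
    rw [hh0]
    gcongr
    exact min_le_right _ _
  have hh0eps : h0 ≤ 𝓑.eps / 2 := by
    rw [hh0]
    gcongr
    exact min_le_left _ _
  have hsm0 : 0 < sm := by rw [hsmdef]; linarith
  have hspβ : β < sp := by rw [hspdef]; linarith
  have hsmsp : sm < sp := by rw [hsmdef, hspdef]; linarith
  have hexclD : ∀ s'', 0 ≤ s'' → s'' ∉ I → ∀ sref ∈ Set.Icc α β,
      |s'' - sref| < 𝓑.eps → entersAt 𝓑 γ D s'' := by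
    intro s'' hs''0 hs''I sref hsref hdist
    have hnotC : γ s'' ∉ C := fun h => hs''I ⟨hs''0, h⟩
    have hblocks : ∀ E ∈ 𝓑.blocks, γ s'' ∈ E → E = D := by
      intro E hE hyE
      by_cases hEC : E = C
      · exact absurd (hEC ▸ hyE) hnotC
      by_cases hED : E = D
      · exact hED
      exfalso
      refine near_two 𝓑 (γ sref) hC hD hE hCD (fun e => hEC e.symm)
        (fun e => hED e.symm) ⟨γ sref, hmemI sref hsref, by simpa using heps⟩
        ⟨γ sref, hCLAIM sref hsref, by simpa using heps⟩ ⟨γ s'', hyE, ?_⟩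
      rw [ray_dist hγ hs''0 (hmem0 sref hsref)]
      exact hdist
    obtain ⟨E, hE, hyE⟩ := exists_block 𝓑 (γ s'')
    have hED := hblocks E hE hyE
    rw [hED] at hyE
    exact ⟨hs''0, hD, hyE, fun B' hB' hne hyB' => hne (hblocks B' hB' hyB')⟩
  have hsmI : sm ∉ I := by
    intro h
    rw [hIeq] at h
    have := h.1
    rw [hsmdef] at this
    linarith
  have hspI : sp ∉ I := by
    intro h
    rw [hIeq] at h
    have := h.2
    linarith
  have hsmD : entersAt 𝓑 γ D sm := by
    refine hexclD sm hsm0.le hsmI α ⟨le_rfl, hαβ⟩ ?_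
    rw [hsmdef, abs_sub_lt_iff]
    constructor <;> linarith
  have hspD : entersAt 𝓑 γ D sp := by
    refine hexclD sp (by linarith [hmem0 β ⟨hαβ, le_rfl⟩]) hspI β ⟨hαβ, le_rfl⟩ ?_
    rw [hspdef, abs_sub_lt_iff]
    constructor <;> linarith
  obtain ⟨ρm, hρm, hρmspec⟩ := excl_ball 𝓑 hD hsmD.2.2.1 hsmD.2.2.2
  obtain ⟨ρp, hρp, hρpspec⟩ := excl_ball 𝓑 hD hspD.2.2.1 hspD.2.2.2
  set J : Set ℝ := Set.Icc 0 τ \ Set.Ioo sm sp with hJ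
  have hJsep : ∀ σ ∈ J, γ σ ∉ C := by
    intro σ hσ hmem
    have hσI : σ ∈ I := ⟨hσ.1.1, hmem⟩
    rw [hIeq] at hσI
    refine hσ.2 ⟨?_, ?_⟩
    · rw [hsmdef]; linarith [hσI.1]
    · linarith [hσI.2]
  have hJcompact : IsCompact J :=
    isCompact_Icc.of_isClosed_subset (isClosed_Icc.sdiff isOpen_Ioo) Set.diff_subset
  have hμex : ∃ μ > 0, ∀ σ ∈ J, μ ≤ Metric.infDist (γ σ) C := by
    rcases Set.eq_empty_or_nonempty J with hemp | hne
    · refine ⟨1, one_pos, fun σ hσ => ?_⟩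
      rw [hemp] at hσ
      exact absurd hσ (Set.notMem_empty σ)
    · have hcont : ContinuousOn (fun σ => Metric.infDist (γ σ) C) J :=
        (Metric.continuous_infDist_pt C).comp_continuousOn
          ((ray_continuousOn hγ).mono (fun x hx => hx.1.1))
      obtain ⟨σm, hσm, hmin'⟩ := hJcompact.exists_isMinOn hne hcont
      have hmin := isMinOn_iff.mp hmin'
      exact ⟨_, (IsClosed.notMem_iff_infDist_pos (𝓑.closed C hC)
        (𝓑.nonempty_blocks C hC)).mp (hJsep σm hσm), hmin⟩
  obtain ⟨μ, hμpos, hμmin⟩ := hμex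
  have hδvpos : 0 < min (min (ρm / 2) (ρp / 2)) (μ / 2) := by positivity
  refine ⟨min (min (ρm / 2) (ρp / 2)) (μ / 2), hδvpos, max τ sp, le_max_left _ _, ?_⟩
  intro γ' hγ' hclose σ hσ hent
  by_cases hzone : σ ∈ Set.Ioo sm sp
  · have hsmIcc : sm ∈ Set.Icc (0:ℝ) (max τ sp) :=
      ⟨hsm0.le, le_trans hsmsp.le (le_max_right _ _)⟩
    have hspIcc : sp ∈ Set.Icc (0:ℝ) (max τ sp) :=
      ⟨le_trans hsm0.le hsmsp.le, le_max_right _ _⟩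
    have h1 : γ' sm ∈ D := by
      refine (hρmspec (γ' sm) (lt_of_le_of_lt (hclose sm hsmIcc) ?_)).1
      calc min (min (ρm / 2) (ρp / 2)) (μ / 2) ≤ ρm / 2 :=
            le_trans (min_le_left _ _) (min_le_left _ _)
        _ < ρm := by linarith
    have h2 : γ' sp ∈ D := by
      refine (hρpspec (γ' sp) (lt_of_le_of_lt (hclose sp hspIcc) ?_)).1
      calc min (min (ρm / 2) (ρp / 2)) (μ / 2) ≤ ρp / 2 :=
            le_trans (min_le_left _ _) (min_le_right _ _)
        _ < ρp := by linarith
    have h3 : γ' σ ∈ D := block_interval 𝓑 hγ' hD hsm0.le hzone.1.le hzone.2.le h1 h2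
    exact hent.2.2.2 D hD hDC h3
  · have hσJ : σ ∈ J := ⟨hσ, hzone⟩
    have h1 : Metric.infDist (γ σ) C ≤ dist (γ σ) (γ' σ) :=
      Metric.infDist_le_dist_of_mem hent.2.2.1
    rw [dist_comm] at h1
    have h2 := hclose σ ⟨hσ.1, hσ.2.trans (le_max_left _ _)⟩
    have h3 := hμmin σ hσJ
    have h4 : min (min (ρm / 2) (ρp / 2)) (μ / 2) ≤ μ / 2 := min_le_right _ _
    linarith

end CKItinerary

namespace CKItinerary

variable {X : Type*} [MetricSpace X]

/-- **Local constancy of itinerary prefixes** along a path in the visual boundary,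
assuming all itineraries are infinite. -/
lemma main_local (𝓑 : BlockDecomposition X Set.univ) {z0 : X}
    (hz0 : ∀ W, IsWall 𝓑 W → z0 ∉ W)
    (c : ℝ → VisualBoundary X z0) (hc : ContinuousOn c (Set.Icc 0 1))
    (hA : ∀ t ∈ Set.Icc (0:ℝ) 1, (enteredBlocks 𝓑 (c t).1).Infinite)
    {u : ℝ} (hu : u ∈ Set.Icc (0:ℝ) 1) {S : Set (Set X)}
    (hS : IsPrefixSet 𝓑 (c u).1 S) :
    ∃ O : Set ℝ, IsOpen O ∧ u ∈ O ∧
      ∀ v ∈ Set.Icc (0:ℝ) 1 ∩ O, IsPrefixSet 𝓑 (c v).1 S := by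
  classical
  rcases Set.eq_empty_or_nonempty S with rfl | hSne
  · exact ⟨Set.univ, isOpen_univ, trivial, fun v _ => prefix_empty 𝓑 (c v).1⟩
  have heps := 𝓑.eps_pos
  set γ : ℝ → X := (c u).1 with hγdef
  have hγ : IsGeodesicRay z0 γ := (c u).2
  obtain ⟨Fs, hFsS, hFsmax⟩ := exists_max 𝓑 hγ hS.1 hSne hS.2.1
  set τs := etime 𝓑 γ Fs with hτsdef
  have hFsent : entersAt 𝓑 γ Fs τs := etime_spec (hS.2.1 Fs hFsS)
  have hτs0 : 0 ≤ τs := hFsent.1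
  have hτle : ∀ F ∈ S, 0 ≤ etime 𝓑 γ F ∧ etime 𝓑 γ F ≤ τs := by
    intro F hF
    have hent := etime_spec (hS.2.1 F hF)
    refine ⟨hent.1, ?_⟩
    by_cases hFFs : F = Fs
    · rw [hFFs]
    · exact (bLT_lt 𝓑 hγ (hFsmax F hF hFFs) hent hFsent).le
  -- transfer radii for the prefix entries
  have hρ : ∀ F : Set X, ∃ ρ > 0, F ∈ S →
      ∀ y, dist y (γ (etime 𝓑 γ F)) < ρ →
        y ∈ F ∧ ∀ B' ∈ 𝓑.blocks, B' ≠ F → y ∉ B' := by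
    intro F
    by_cases hF : F ∈ S
    · obtain ⟨ρ, hρpos, hspec⟩ := excl_ball 𝓑 (entered_mem_blocks (hS.2.1 F hF))
        (etime_spec (hS.2.1 F hF)).2.2.1 (etime_spec (hS.2.1 F hF)).2.2.2
      exact ⟨ρ, hρpos, fun _ => hspec⟩
    · exact ⟨1, one_pos, fun h => absurd h hF⟩
  choose ρ hρpos hρspec using hρ
  obtain ⟨ρ₀, hρ₀pos, hρ₀le⟩ := pos_min_over hS.1 ρ (fun F _ => hρpos F)
  -- the compact piece of the ray and the finitely many nearby blocks
  set K : Set X := γ '' Set.Icc 0 τs with hKdef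
  have hKcp : IsCompact K := isCompact_Icc.image_of_continuousOn
      ((ray_continuousOn hγ).mono (fun x hx => hx.1))
  have hKne : K.Nonempty := ⟨γ 0, 0, ⟨le_rfl, hτs0⟩, rfl⟩
  set 𝔏 : Set (Set X) := {B | B ∈ 𝓑.blocks ∧ ∃ y ∈ B, Metric.infDist y K < 𝓑.eps / 2}
    with h𝔏def
  have h𝔏fin : 𝔏.Finite := finite_near 𝓑 hKcp hKne
  -- the per-block exclusion data
  have hexcl : ∀ C : Set X, ∃ δ > 0, ∃ R, τs ≤ R ∧
      (C ∈ 𝔏 \ S → ∀ γ' : ℝ → X, IsGeodesicRay z0 γ' →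
        (∀ s ∈ Set.Icc (0:ℝ) R, dist (γ' s) (γ s) ≤ δ) →
        ∀ σ ∈ Set.Icc (0:ℝ) τs, ¬ entersAt 𝓑 γ' C σ) := by
    intro C
    by_cases hC𝔏 : C ∈ 𝔏 \ S
    case neg => exact ⟨1, one_pos, τs, le_rfl, fun h => absurd h hC𝔏⟩
    case pos =>
    have hCbl : C ∈ 𝓑.blocks := hC𝔏.1.1
    by_cases hCent : C ∈ enteredBlocks 𝓑 γ
    · have hsep : ∀ σ ∈ Set.Icc (0:ℝ) τs, γ σ ∉ C := by
        intro σ hσ hmem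
        have hCFs : C ≠ Fs := fun e => hC𝔏.2 (e ▸ hFsS)
        have hlt : bLT 𝓑 γ Fs C := by
          rcases bLT_total hCent (hS.2.1 Fs hFsS) hCFs with h | h
          · exact absurd (hS.2.2 C hCent Fs hFsS h) hC𝔏.2
          · exact h
        have hw := etime_spec hCent
        have hτw : τs < etime 𝓑 γ C := bLT_lt 𝓑 hγ hlt hFsent hw
        have hmem' : γ τs ∈ C :=
          block_interval 𝓑 hγ hCbl hσ.1 hσ.2 hτw.le hmem hw.2.2.1
        exact hFsent.2.2.2 C hCbl hCFs hmem'
      obtain ⟨δ, hδpos, hspec⟩ := EX1 𝓑 hγ hCbl hτs0 hsep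
      exact ⟨δ, hδpos, τs, le_rfl, fun _ γ' _ hclose σ hσ hent =>
        hspec γ' hclose σ hσ hent.2.2.1⟩
    · by_cases hItouch : ∃ σ₀, 0 ≤ σ₀ ∧ γ σ₀ ∈ C
      · obtain ⟨σ₀, hσ₀0, hσ₀C⟩ := hItouch
        obtain ⟨δ, hδpos, R, hR, hspec⟩ :=
          EX2 𝓑 hz0 hγ (hA u hu) hCbl hCent hσ₀0 hσ₀C hτs0
        exact ⟨δ, hδpos, R, hR, fun _ => hspec⟩
      · push_neg at hItouch
        obtain ⟨δ, hδpos, hspec⟩ := EX1 𝓑 hγ hCbl hτs0 (fun σ hσ => hItouch σ hσ.1)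
        exact ⟨δ, hδpos, τs, le_rfl, fun _ γ' _ hclose σ hσ hent =>
          hspec γ' hclose σ hσ hent.2.2.1⟩
  choose δf hδfpos Rf hRfge hexclspec using hexcl
  obtain ⟨δ₁, hδ₁pos, hδ₁le⟩ := pos_min_over (h𝔏fin.diff : (𝔏 \ S).Finite) δf (fun C _ => hδfpos C)
  obtain ⟨Rb, hRb⟩ := ((h𝔏fin.diff : (𝔏 \ S).Finite).image Rf).bddAbove
  set Rbar := max Rb τs with hRbardef
  have hδvpos : 0 < min (min δ₁ ρ₀) (𝓑.eps / 2) / 2 := by positivity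
  set δv := min (min δ₁ ρ₀) (𝓑.eps / 2) / 2 with hδvdef
  obtain ⟨𝒰, hUo, hUmem, hUclose⟩ := close_nbhd (c u) Rbar hδvpos
  obtain ⟨O, hOo, hOu, hOsub⟩ := nbhd_of_continuousOn hc hu hUo hUmem
  refine ⟨O, hOo, hOu, ?_⟩
  rintro v hv
  set γ' : ℝ → X := (c v).1 with hγ'def
  have hγ' : IsGeodesicRay z0 γ' := (c v).2
  have hclose : ∀ s ∈ Set.Icc (0:ℝ) Rbar, dist (γ' s) (γ s) ≤ δv := by
    intro s hs
    rw [dist_comm]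
    exact hUclose (c v) (hOsub v hv) s hs
  have hδρ : δv < ρ₀ := by
    rw [hδvdef]
    have h1 : min (min δ₁ ρ₀) (𝓑.eps / 2) ≤ ρ₀ :=
      le_trans (min_le_left _ _) (min_le_right _ _)
    linarith
  have hent' : ∀ F ∈ S, entersAt 𝓑 γ' F (etime 𝓑 γ F) := by
    intro F hF
    have h1 : etime 𝓑 γ F ∈ Set.Icc (0:ℝ) Rbar :=
      ⟨(hτle F hF).1, (hτle F hF).2.trans (le_max_right _ _)⟩
    have h2 : dist (γ' (etime 𝓑 γ F)) (γ (etime 𝓑 γ F)) < ρ F :=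
      lt_of_le_of_lt (hclose _ h1) (lt_of_lt_of_le hδρ (hρ₀le F hF))
    obtain ⟨hmem, hexc⟩ := hρspec F hF (γ' (etime 𝓑 γ F)) h2
    exact ⟨(hτle F hF).1, entered_mem_blocks (hS.2.1 F hF), hmem, hexc⟩
  refine ⟨hS.1, fun B hB => ⟨etime 𝓑 γ B, hent' B hB⟩, ?_⟩
  intro C hCent' B hB hCB
  by_contra hCS
  have hCFs' : bLT 𝓑 γ' C Fs := by
    by_cases hBFs : B = Fs
    · exact hBFs ▸ hCB
    · refine bLT_trans 𝓑 hγ' hCB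
        ⟨hBFs, etime 𝓑 γ B, τs, hent' B hB, hent' Fs hFsS, ?_⟩
      exact bLT_lt 𝓑 hγ (hFsmax B hB hBFs) (etime_spec (hS.2.1 B hB)) hFsent
  obtain ⟨hne, σ', s', hσC', hs', hlt'⟩ := id hCFs'
  have hσlt : σ' < τs := bLT_lt 𝓑 hγ' hCFs' hσC' (hent' Fs hFsS)
  have hσ0 : 0 ≤ σ' := hσC'.1
  have hσIcc : σ' ∈ Set.Icc (0:ℝ) τs := ⟨hσ0, hσlt.le⟩
  have hC𝔏 : C ∈ 𝔏 \ S := by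
    refine ⟨⟨hσC'.2.1, γ' σ', hσC'.2.2.1, ?_⟩, hCS⟩
    have h1 : Metric.infDist (γ' σ') K ≤ dist (γ' σ') (γ σ') :=
      Metric.infDist_le_dist_of_mem ⟨σ', ⟨hσ0, hσlt.le⟩, rfl⟩
    have h2 : dist (γ' σ') (γ σ') ≤ δv :=
      hclose σ' ⟨hσ0, hσlt.le.trans (le_max_right _ _)⟩
    have h3 : δv < 𝓑.eps / 2 := by
      rw [hδvdef]
      have h4 : min (min δ₁ ρ₀) (𝓑.eps / 2) ≤ 𝓑.eps / 2 := min_le_right _ _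
      linarith
    linarith
  refine hexclspec C hC𝔏 γ' hγ' ?_ σ' hσIcc hσC'
  intro s hs
  have hRfC : Rf C ≤ Rbar :=
    le_trans (hRb ⟨C, hC𝔏, rfl⟩) (le_max_left _ _)
  refine le_trans (hclose s ⟨hs.1, hs.2.trans hRfC⟩) ?_
  rw [hδvdef]
  have h4 := hδ₁le C hC𝔏
  have h5 : min (min δ₁ ρ₀) (𝓑.eps / 2) ≤ δ₁ :=
    le_trans (min_le_left _ _) (min_le_left _ _)
  linarith

end CKItinerary

namespace CKItinerary

variable {X : Type*} [MetricSpace X]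

/-- **Master lemma**: if every point of the path has infinite itinerary, then all
points of the path have the same itinerary. -/
lemma master (𝓑 : BlockDecomposition X Set.univ) {z0 : X}
    (hz0 : ∀ W, IsWall 𝓑 W → z0 ∉ W)
    (c : ℝ → VisualBoundary X z0) (hc : ContinuousOn c (Set.Icc 0 1))
    (hA : ∀ t ∈ Set.Icc (0:ℝ) 1, (enteredBlocks 𝓑 (c t).1).Infinite) :
    ∀ t ∈ Set.Icc (0:ℝ) 1, SameItinerary 𝓑 (c t).1 (c 0).1 := by
  classical
  have h0I : (0:ℝ) ∈ Set.Icc (0:ℝ) 1 := ⟨le_rfl, zero_le_one⟩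
  have hSex : ∀ k : ℕ, ∃ S, IsPrefixSet 𝓑 (c 0).1 S ∧ S.ncard = k :=
    fun k => prefix_exists 𝓑 (c 0).2 (hA 0 h0I) k
  choose S hS hcard using hSex
  have hglue : ∀ k, ∀ v ∈ Set.Icc (0:ℝ) 1, IsPrefixSet 𝓑 (c v).1 (S k) := by
    intro k
    refine glue ?_ (hS k)
    intro u hu
    by_cases hPu : IsPrefixSet 𝓑 (c u).1 (S k)
    · obtain ⟨O, hOo, hOu, hOP⟩ := main_local 𝓑 hz0 c hc hA hu hPu
      exact ⟨O, hOo, hOu, Or.inl hOP⟩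
    · obtain ⟨Su, hSu, hSucard⟩ := prefix_exists 𝓑 (c u).2 (hA u hu) k
      obtain ⟨O, hOo, hOu, hOP⟩ := main_local 𝓑 hz0 c hc hA hu hSu
      refine ⟨O, hOo, hOu, Or.inr ?_⟩
      intro v hv hPv
      have h1 : IsPrefixSet 𝓑 (c v).1 Su := hOP v hv
      have h2 : Su = S k := prefix_unique (c v).2 h1 hPv (by rw [hSucard, hcard])
      exact hPu (h2 ▸ hSu)
  have hdc : ∀ w ∈ Set.Icc (0:ℝ) 1, ∀ B ∈ enteredBlocks 𝓑 (c w).1,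
      B ∈ enteredBlocks 𝓑 (c 0).1 ∧
        dcSet 𝓑 (c w).1 B = dcSet 𝓑 (c 0).1 B := by
    intro w hw B hB
    set m := (dcSet 𝓑 (c w).1 B).ncard with hm
    have hpw : IsPrefixSet 𝓑 (c w).1 (dcSet 𝓑 (c w).1 B) := dc_prefix 𝓑 (c w).2 hB
    have he1 : dcSet 𝓑 (c w).1 B = S m :=
      prefix_unique (c w).2 hpw (hglue m w hw) (by rw [hcard])
    have hBSm : B ∈ S m := he1 ▸ mem_dcSet_self 𝓑 (c w).1 B
    have hB0 : B ∈ enteredBlocks 𝓑 (c 0).1 := (hS m).2.1 B hBSm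
    set m' := (dcSet 𝓑 (c 0).1 B).ncard with hm'
    have hp0 : IsPrefixSet 𝓑 (c 0).1 (dcSet 𝓑 (c 0).1 B) := dc_prefix 𝓑 (c 0).2 hB0
    have he2 : dcSet 𝓑 (c 0).1 B = S m' :=
      prefix_unique (c 0).2 hp0 (hS m') (by rw [hcard])
    have hBSm' : B ∈ S m' := he2 ▸ mem_dcSet_self 𝓑 (c 0).1 B
    have hsub1 : dcSet 𝓑 (c 0).1 B ⊆ S m := by
      rintro C (rfl | hC)
      · exact hBSm
      · exact (hS m).2.2 C hC.1 B hBSm hC.2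
    have hle1 : m' ≤ m := by
      have h3 := Set.ncard_le_ncard hsub1 ((hS m).1)
      rw [hcard] at h3
      rw [hm']
      exact h3
    have hsub2 : dcSet 𝓑 (c w).1 B ⊆ S m' := by
      rintro C (rfl | hC)
      · exact hBSm'
      · exact (hglue m' w hw).2.2 C hC.1 B hBSm' hC.2
    have hle2 : m ≤ m' := by
      have h3 := Set.ncard_le_ncard hsub2 ((hglue m' w hw).1)
      rw [hcard] at h3
      rw [hm]
      exact h3
    have hmm : m = m' := le_antisymm hle2 hle1
    refine ⟨hB0, ?_⟩
    rw [he1, he2, hmm]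
  intro t ht
  have hEq : enteredBlocks 𝓑 (c t).1 = enteredBlocks 𝓑 (c 0).1 := by
    apply Set.Subset.antisymm
    · exact fun B hB => (hdc t ht B hB).1
    · intro B hB
      set q := (dcSet 𝓑 (c 0).1 B).ncard with hq
      have hp0 : IsPrefixSet 𝓑 (c 0).1 (dcSet 𝓑 (c 0).1 B) := dc_prefix 𝓑 (c 0).2 hB
      have he : dcSet 𝓑 (c 0).1 B = S q :=
        prefix_unique (c 0).2 hp0 (hS q) (by rw [hcard])
      have hBSq : B ∈ S q := he ▸ mem_dcSet_self 𝓑 (c 0).1 B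
      exact (hglue q t ht).2.1 B hBSq
  refine ⟨hEq, ?_⟩
  intro B B' t₁ s₁ hBt hB's ht₁s₁
  have hBent : B ∈ enteredBlocks 𝓑 (c t).1 := ⟨t₁, hBt⟩
  have hB'ent : B' ∈ enteredBlocks 𝓑 (c t).1 := ⟨s₁, hB's⟩
  have hBent0 : B ∈ enteredBlocks 𝓑 (c 0).1 := hEq ▸ hBent
  have hB'ent0 : B' ∈ enteredBlocks 𝓑 (c 0).1 := hEq ▸ hB'ent
  by_cases hBB' : B = B'
  · subst hBB'
    exact ⟨etime 𝓑 (c 0).1 B, etime 𝓑 (c 0).1 B, etime_spec hBent0,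
      etime_spec hBent0, le_rfl⟩
  · have ht₁ne : t₁ ≠ s₁ := fun e => hBB' (entersAt_unique (e ▸ hBt) hB's)
    have hbt : bLT 𝓑 (c t).1 B B' :=
      ⟨hBB', t₁, s₁, hBt, hB's, lt_of_le_of_ne ht₁s₁ ht₁ne⟩
    have h1 : (dcSet 𝓑 (c t).1 B).ncard < (dcSet 𝓑 (c t).1 B').ncard :=
      dc_lt_of_bLT 𝓑 (c t).2 hBent hB'ent hbt
    rw [(hdc t ht B hBent).2, (hdc t ht B' hB'ent).2] at h1
    have hb0 : bLT 𝓑 (c 0).1 B B' := bLT_of_dc_lt 𝓑 (c 0).2 hBent0 hB'ent0 h1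
    exact ⟨etime 𝓑 (c 0).1 B, etime 𝓑 (c 0).1 B', etime_spec hBent0,
      etime_spec hB'ent0,
      (bLT_lt 𝓑 (c 0).2 hb0 (etime_spec hBent0) (etime_spec hB'ent0)).le⟩

end CKItinerary

/-- Let `Z = X_α × ℝ^{n+1}` with the product block decomposition and
let `c : [0,1] → ∂Z` be a path such that `c 0` has infinite itinerary.  Then either
every `c t` has the same itinerary as `c 0`, or some `c t` has finite itinerary. -/
theorem path_constant_itinerary_or_finite
    (n : ℕ) (M : SalvettiModel CKGraph)
    (𝓑X : BlockDecomposition M.X Set.univ) (h𝓑X : IsCKBlockDecomposition M 𝓑X)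
    (𝓑Z : BlockDecomposition (ZProd M.X n) Set.univ)
    (hcyl : IsCylinderDecomposition 𝓑X 𝓑Z)
    (z0 : ZProd M.X n) (hz0 : ∀ W : Set (ZProd M.X n), IsWall 𝓑Z W → z0 ∉ W)
    (c : ℝ → VisualBoundary (ZProd M.X n) z0) (hc : ContinuousOn c (Set.Icc 0 1))
    (h0 : HasInfiniteItinerary 𝓑Z (c 0).1) :
    (∀ t ∈ Set.Icc (0 : ℝ) 1, SameItinerary 𝓑Z ((c t).1) ((c 0).1)) ∨
    ∃ t ∈ Set.Icc (0 : ℝ) 1, (enteredBlocks 𝓑Z ((c t).1)).Finite := by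
  classical
  by_cases hfin : ∃ t ∈ Set.Icc (0:ℝ) 1, (enteredBlocks 𝓑Z ((c t).1)).Finite
  · exact Or.inr hfin
  · push_neg at hfin
    exact Or.inl (CKItinerary.master 𝓑Z hz0 c hc hfin)
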